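/- With ω_n = n + 2: (a) for all i, j, m ∈ ℕ such that one of ω_i, ω_j, ω_m equals the sum of the other two (for instance m = i + j + 2), one has 𝔠̄_{ijm} = 0; (b) for all i, j, k, m ∈ ℕ such that one of ω_i, ω_j, ω_k, ω_m equals the sum of the other three (for instance m = i + j + k + 4), one has 𝔠_{ijkm} = 0. -/

import Mathlib

open MeasureTheory

/-- Gegenbauer (ultraspherical) polynomial `C_n^{(2)}` of degree `n` with parameter `2`,
as a real-valued function. -/
noncomputable def geg (n : ℕ) (y : ℝ) : ℝ :=
  ∑ k ∈ Finset.range (n / 2 + 1),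
    (-1:ℝ) ^ k *
      ((Nat.factorial (n - k + 1) : ℝ) /
        ((Nat.factorial k : ℝ) * (Nat.factorial (n - 2 * k) : ℝ))) *
      (2 * y) ^ (n - 2 * k)

/-- The normalization constant `𝔴_n = √(8/π)/√((n+1)(n+3))`. -/
noncomputable def wYM (n : ℕ) : ℝ :=
  Real.sqrt (8 / Real.pi) / Real.sqrt (((n:ℝ) + 1) * ((n:ℝ) + 3))

/-- The quadratic Fourier coefficients `𝔠̄_{ijm}` of the spherically symmetric equivariant
Yang–Mills equation on the Einstein cylinder. -/
noncomputable def cbar (i j m : ℕ) : ℝ :=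
  wYM i * wYM j * wYM m *
    ∫ y in (-1:ℝ)..1, geg i y * geg j y * geg m y * (1 - y ^ 2) ^ ((3:ℝ) / 2)

/-- The cubic Fourier coefficients `𝔠_{ijkm}` of the spherically symmetric equivariant
Yang–Mills equation on the Einstein cylinder. -/
noncomputable def cquad (i j k m : ℕ) : ℝ :=
  wYM i * wYM j * wYM k * wYM m *
    ∫ y in (-1:ℝ)..1, geg i y * geg j y * geg k y * geg m y * (1 - y ^ 2) ^ ((5:ℝ) / 2)

/-- Coefficients of the Gegenbauer polynomial with parameter `λ = b + 1`. -/
noncomputable def gcc (b n k : ℕ) : ℝ :=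
  (-1:ℝ) ^ k * (Nat.factorial (n - k + b) : ℝ) /
    ((Nat.factorial k : ℝ) * (Nat.factorial (n - 2 * k) : ℝ) * (Nat.factorial b : ℝ))

/-- Gegenbauer polynomial with parameter `λ = b + 1` as a function. -/
noncomputable def gegF (b n : ℕ) (y : ℝ) : ℝ :=
  ∑ k ∈ Finset.range (n / 2 + 1), gcc b n k * (2 * y) ^ (n - 2 * k)

/-- Formal derivative of `gegF`. -/
noncomputable def gegD (b n : ℕ) (y : ℝ) : ℝ :=
  ∑ k ∈ Finset.range (n / 2 + 1),
    gcc b n k * (((n - 2 * k : ℕ) : ℝ) * 2 * (2 * y) ^ (n - 2 * k - 1))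

lemma geg_eq_gegF (n : ℕ) (y : ℝ) : geg n y = gegF 1 n y := by
  unfold geg gegF gcc
  refine Finset.sum_congr rfl fun k _ => ?_
  rw [Nat.factorial_one]
  push_cast
  ring

lemma hasDerivAt_gegF (b n : ℕ) (y : ℝ) :
    HasDerivAt (gegF b n) (gegD b n y) y := by
  unfold gegF gegD
  refine HasDerivAt.fun_sum fun k _ => ?_
  have h : HasDerivAt (fun y : ℝ => (2*y) ^ (n - 2*k))
      (((n - 2*k : ℕ) : ℝ) * (2*y) ^ (n - 2*k - 1) * 2) y := by
    have h2 : HasDerivAt (fun y : ℝ => 2*y) 2 y := by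
      simpa using (hasDerivAt_id y).const_mul (2:ℝ)
    exact (hasDerivAt_pow (n - 2*k) (2*y)).comp y h2
  have := h.const_mul (gcc b n k)
  convert this using 1
  · rfl
  ring

lemma fact_cast_succ (m : ℕ) :
    ((Nat.factorial (m+1) : ℝ)) = ((m:ℝ)+1) * (Nat.factorial m : ℝ) := by
  rw [Nat.factorial_succ]; push_cast; ring

lemma case_zero (b n : ℕ) :
    -(((b:ℝ)+1) * gcc (b+1) n 0 * ((n:ℝ) + 2*(b:ℝ)+3))
      = -(((n:ℝ)+1) * ((n:ℝ)+2*(b:ℝ)+3)) * gcc b (n+1) 0 := by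
  unfold gcc
  simp only [Nat.sub_zero, Nat.mul_zero, pow_zero]
  rw [show n + 1 + b = (n + b) + 1 from by omega, show n + (b+1) = (n+b)+1 from by omega,
    fact_cast_succ (n+b), fact_cast_succ b, fact_cast_succ n]
  have h1 : (Nat.factorial n : ℝ) ≠ 0 := Nat.cast_ne_zero.2 (Nat.factorial_ne_zero n)
  have h2 : (Nat.factorial b : ℝ) ≠ 0 := Nat.cast_ne_zero.2 (Nat.factorial_ne_zero b)
  have h3 : (Nat.factorial 0 : ℝ) = 1 := by norm_num [Nat.factorial]
  rw [h3]
  field_simp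

lemma case_main (b k p : ℕ) :
    4*((b:ℝ)+1) * gcc (b+1) (2*k+p+2) k * ((p:ℝ)+2)
      - ((b:ℝ)+1) * gcc (b+1) (2*k+p+2) (k+1) * ((p:ℝ)+2*(b:ℝ)+3)
    = -((2*(k:ℝ)+(p:ℝ)+3) * (2*(k:ℝ)+(p:ℝ)+2*(b:ℝ)+5)) * gcc b (2*k+p+3) (k+1) := by
  unfold gcc
  rw [show 2*k+p+2 - k + (b+1) = (k+p+b+2)+1 from by omega,
    show 2*k+p+2 - 2*k = (p+1)+1 from by omega,
    show 2*k+p+2 - (k+1) + (b+1) = k+p+b+2 from by omega,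
    show 2*k+p+2 - 2*(k+1) = p from by omega,
    show 2*k+p+3 - (k+1) + b = k+p+b+2 from by omega,
    show 2*k+p+3 - 2*(k+1) = p+1 from by omega,
    fact_cast_succ (k+p+b+2), fact_cast_succ (p+1), fact_cast_succ p,
    fact_cast_succ k, fact_cast_succ b, pow_succ]
  have h1 : (Nat.factorial k : ℝ) ≠ 0 := Nat.cast_ne_zero.2 (Nat.factorial_ne_zero k)
  have h2 : (Nat.factorial b : ℝ) ≠ 0 := Nat.cast_ne_zero.2 (Nat.factorial_ne_zero b)
  have h3 : (Nat.factorial p : ℝ) ≠ 0 := Nat.cast_ne_zero.2 (Nat.factorial_ne_zero p)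
  have h4 : (Nat.factorial (k+p+b+2) : ℝ) ≠ 0 :=
    Nat.cast_ne_zero.2 (Nat.factorial_ne_zero _)
  push_cast
  field_simp
  ring

lemma case_odd (b k : ℕ) :
    4*((b:ℝ)+1) * gcc (b+1) (2*k+1) k * ((1:ℕ):ℝ)
      = -((2*(k:ℝ)+2) * (2*(k:ℝ)+2*(b:ℝ)+4)) * gcc b (2*k+2) (k+1) := by
  unfold gcc
  rw [show 2*k+1 - k + (b+1) = (k+b+1)+1 from by omega,
    show 2*k+1 - 2*k = 1 from by omega,
    show 2*k+2 - (k+1) + b = k+b+1 from by omega,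
    show 2*k+2 - 2*(k+1) = 0 from by omega,
    fact_cast_succ (k+b+1), fact_cast_succ k, fact_cast_succ b, pow_succ]
  have h1 : (Nat.factorial k : ℝ) ≠ 0 := Nat.cast_ne_zero.2 (Nat.factorial_ne_zero k)
  have h2 : (Nat.factorial b : ℝ) ≠ 0 := Nat.cast_ne_zero.2 (Nat.factorial_ne_zero b)
  have h4 : (Nat.factorial (k+b+1) : ℝ) ≠ 0 := Nat.cast_ne_zero.2 (Nat.factorial_ne_zero _)
  have h3 : (Nat.factorial 0 : ℝ) = 1 := by norm_num [Nat.factorial]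
  have h5 : (Nat.factorial 1 : ℝ) = 1 := by norm_num [Nat.factorial]
  rw [h3, h5]
  push_cast
  field_simp
  ring

lemma key_identity (b n : ℕ) (y : ℝ) :
    (2 * (b:ℝ) + 2) * ((1 - y^2) * gegD (b+1) n y - (2*(b:ℝ)+3) * y * gegF (b+1) n y)
      = -(((n:ℝ)+1) * ((n:ℝ)+2*(b:ℝ)+3)) * gegF b (n+1) y := by
  set A : ℕ → ℝ := fun k =>
    4*((b:ℝ)+1) * gcc (b+1) n k * ((n - 2*k : ℕ) : ℝ) * (2*y)^(n - 2*k - 1) with hA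
  set Bf : ℕ → ℝ := fun k =>
    ((b:ℝ)+1) * gcc (b+1) n k * (((n - 2*k : ℕ) : ℝ) + 2*(b:ℝ)+3) * (2*y)^(n + 1 - 2*k) with hBf
  set R : ℕ → ℝ := fun k =>
    -(((n:ℝ)+1) * ((n:ℝ)+2*(b:ℝ)+3)) * (gcc b (n+1) k * (2*y)^(n + 1 - 2*k)) with hR
  have hLHS : (2 * (b:ℝ) + 2) * ((1 - y^2) * gegD (b+1) n y - (2*(b:ℝ)+3) * y * gegF (b+1) n y)
      = ∑ k ∈ Finset.range (n/2+1), (A k - Bf k) := by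
    unfold gegD gegF
    simp only [Finset.mul_sum, ← Finset.sum_sub_distrib]
    refine Finset.sum_congr rfl fun k hk => ?_
    have hk' : 2*k ≤ n := by have := Finset.mem_range.1 hk; omega
    obtain ⟨p, hp⟩ : ∃ p, n = 2*k + p := ⟨n - 2*k, by omega⟩
    subst hp
    simp only [hA, hBf,
      show 2*k+p - 2*k = p from by omega,
      show 2*k+p + 1 - 2*k = p+1 from by omega]
    cases p with
    | zero =>
      norm_num
      ring
    | succ q =>
      simp only [Nat.add_sub_cancel]
      push_cast
      rw [pow_succ, pow_succ]
      ring
  have hAs : (∑ k ∈ Finset.range (n/2+2), (if k = 0 then (0:ℝ) else A (k-1)))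
      = ∑ k ∈ Finset.range (n/2+1), A k := by
    rw [Finset.sum_range_succ']
    simp
  have hBs : (∑ k ∈ Finset.range (n/2+2), (if k ≤ n/2 then Bf k else 0))
      = ∑ k ∈ Finset.range (n/2+1), Bf k := by
    rw [Finset.sum_range_succ, if_neg (by omega), add_zero]
    exact Finset.sum_congr rfl fun k hk =>
      if_pos (by have := Finset.mem_range.1 hk; omega)
  have hRs : -(((n:ℝ)+1) * ((n:ℝ)+2*(b:ℝ)+3)) * gegF b (n+1) y
      = ∑ k ∈ Finset.range (n/2+2), (if k ≤ (n+1)/2 then R k else 0) := by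
    unfold gegF
    rw [Finset.mul_sum]
    calc (∑ k ∈ Finset.range ((n+1)/2+1),
            -(((n:ℝ)+1) * ((n:ℝ)+2*(b:ℝ)+3)) * (gcc b (n+1) k * (2*y)^(n+1-2*k)))
        = ∑ k ∈ Finset.range ((n+1)/2+1), (if k ≤ (n+1)/2 then R k else 0) := by
          refine Finset.sum_congr rfl fun k hk => ?_
          rw [if_pos (by have := Finset.mem_range.1 hk; omega), hR]
      _ = ∑ k ∈ Finset.range (n/2+2), (if k ≤ (n+1)/2 then R k else 0) := by
          refine Finset.sum_subset (Finset.range_subset_range.2 (by omega)) fun k hk hk' => ?_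
          have h1 := Finset.mem_range.1 hk
          have h2 : ¬ k < (n+1)/2+1 := fun h => hk' (Finset.mem_range.2 h)
          exact if_neg (by omega)
  have hfin : ∀ k ∈ Finset.range (n/2+2),
      ((if k = 0 then (0:ℝ) else A (k-1)) - (if k ≤ n/2 then Bf k else 0))
        = (if k ≤ (n+1)/2 then R k else 0) := by
    intro k hk
    have hk2 : k < n/2+2 := Finset.mem_range.1 hk
    rcases Nat.eq_zero_or_pos k with rfl | hkpos
    · rw [if_pos rfl, if_pos (by omega), if_pos (by omega), zero_sub]
      simp only [hBf, hR, Nat.mul_zero, Nat.sub_zero]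
      linear_combination (2*y)^(n+1) * case_zero b n
    · obtain ⟨k', rfl⟩ : ∃ k', k = k'+1 := ⟨k-1, by omega⟩
      rw [if_neg (Nat.succ_ne_zero k'), Nat.add_sub_cancel]
      by_cases hmain : 2*(k'+1) ≤ n
      · rw [if_pos (by omega), if_pos (by omega)]
        obtain ⟨p, hp⟩ : ∃ p, n = 2*k' + p + 2 := ⟨n - 2*k' - 2, by omega⟩
        subst hp
        simp only [hA, hBf, hR,
          show 2*k'+p+2 - 2*k' = p+2 from by omega,
          show 2*k'+p+2 - 2*k' - 1 = p+1 from by omega,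
          show 2*k'+p+2 - 2*(k'+1) = p from by omega,
          show 2*k'+p+2 + 1 - 2*(k'+1) = p+1 from by omega,
          show 2*k'+p+2 + 1 = 2*k'+p+3 from by omega]
        push_cast
        linear_combination (2*y)^(p+1) * case_main b k' p
      · rw [if_neg (by omega)]
        by_cases hodd : 2*(k'+1) = n+1
        · rw [if_pos (by omega), sub_zero]
          obtain rfl : n = 2*k'+1 := by omega
          simp only [hA, hR,
            show 2*k'+1 - 2*k' = 1 from by omega,
            show 2*k'+1 - 2*k' - 1 = 0 from by omega,
            show 2*k'+1 + 1 - 2*(k'+1) = 0 from by omega,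
            show 2*k'+1 + 1 = 2*k'+2 from by omega,
            pow_zero]
          push_cast
          linear_combination case_odd b k'
        · rw [if_neg (by omega), sub_zero]
          simp only [hA, show n - 2*k' = 0 from by omega]
          norm_num
  rw [hLHS, hRs, Finset.sum_sub_distrib, ← hAs, ← hBs, ← Finset.sum_sub_distrib]
  exact Finset.sum_congr rfl hfin

lemma continuous_gegF (b n : ℕ) : Continuous (gegF b n) := by
  unfold gegF; exact continuous_finset_sum _ fun k _ => by fun_prop

lemma continuous_gegD (b n : ℕ) : Continuous (gegD b n) := by
  unfold gegD; exact continuous_finset_sum _ fun k _ => by fun_prop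

lemma continuous_weight (c : ℝ) (hc : 0 ≤ c) :
    Continuous (fun y : ℝ => (1 - y^2) ^ c) := by
  have h : Continuous (fun x : ℝ => x ^ c) :=
    continuous_iff_continuousAt.2 fun x => Real.continuousAt_rpow_const x c (Or.inr hc)
  exact h.comp (by fun_prop)


lemma rpow_succ' (x c : ℝ) (hx : 0 ≤ x) (hc : 0 < c) : x ^ (c+1) = x * x ^ c := by
  rcases eq_or_lt_of_le hx with h | h
  · rw [← h, Real.zero_rpow (by positivity), Real.zero_rpow (by positivity), mul_zero]
  · rw [Real.rpow_add h, Real.rpow_one]; ring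

/-- The derivative expression appearing in the Rodrigues-type identity. -/
noncomputable def gegE (b n : ℕ) (y : ℝ) : ℝ :=
  (1 - y^2) ^ ((b:ℝ) + 1/2) *
    ((1 - y^2) * gegD (b+1) n y - (2*(b:ℝ)+3) * y * gegF (b+1) n y)

lemma continuous_gegE (b n : ℕ) : Continuous (gegE b n) := by
  unfold gegE
  exact ((continuous_weight _ (by positivity)).mul
    (((continuous_const.sub (continuous_pow 2)).mul (continuous_gegD _ _)).sub
      ((continuous_const.mul continuous_id).mul (continuous_gegF _ _))))

/-- derivative of the weight times gegF -/
lemma hasDerivAt_G (b n : ℕ) (y : ℝ) (hy : y ∈ Set.uIcc (-1:ℝ) 1) :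
    HasDerivAt (fun x : ℝ => (1 - x^2) ^ ((b:ℝ) + 3/2) * gegF (b+1) n x)
      ((1 - y^2) ^ ((b:ℝ) + 1/2) *
        ((1 - y^2) * gegD (b+1) n y - (2*(b:ℝ)+3) * y * gegF (b+1) n y)) y := by
  have hy2 : 0 ≤ 1 - y^2 := by
    rw [Set.uIcc_of_le (by norm_num)] at hy
    nlinarith [hy.1, hy.2]
  have hin : HasDerivAt (fun x : ℝ => 1 - x^2) (-(2*y)) y := by
    simpa using ((hasDerivAt_pow 2 y).const_sub 1)
  have hw : HasDerivAt (fun x : ℝ => (1 - x^2) ^ ((b:ℝ) + 3/2))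
      (((b:ℝ) + 3/2) * (1 - y^2) ^ ((b:ℝ) + 1/2) * (-(2*y))) y := by
    have h1 : HasDerivAt (fun t : ℝ => t ^ ((b:ℝ) + 3/2))
        (((b:ℝ) + 3/2) * (1 - y^2) ^ (((b:ℝ) + 3/2) - 1)) (1 - y^2) :=
      Real.hasDerivAt_rpow_const (Or.inr (by push_cast; linarith [Nat.cast_nonneg (α := ℝ) b]))
    have := h1.comp y hin
    have h32 : (b:ℝ) + 3/2 - 1 = (b:ℝ) + 1/2 := by ring
    rw [h32] at this
    exact this
  have hprod := hw.fun_mul (hasDerivAt_gegF (b+1) n y)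
  convert hprod using 1
  · rfl
  · rfl
  have hsplit : (1 - y^2) ^ ((b:ℝ) + 3/2) = (1 - y^2) * (1 - y^2) ^ ((b:ℝ) + 1/2) := by
    have : ((b:ℝ) + 1/2) + 1 = (b:ℝ) + 3/2 := by ring
    rw [← this, rpow_succ' _ _ hy2 (by positivity)]
  rw [hsplit]
  ring

/-- FTC: integral of derivative of G over [-1,1] is zero. -/
lemma int_G_deriv (b n : ℕ) :
    (∫ y in (-1:ℝ)..1, (1 - y^2) ^ ((b:ℝ) + 1/2) *
        ((1 - y^2) * gegD (b+1) n y - (2*(b:ℝ)+3) * y * gegF (b+1) n y)) = 0 := by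
  have hcont : Continuous (fun y : ℝ => (1 - y^2) ^ ((b:ℝ) + 1/2) *
      ((1 - y^2) * gegD (b+1) n y - (2*(b:ℝ)+3) * y * gegF (b+1) n y)) := by
    exact ((continuous_weight _ (by positivity)).mul
      (((continuous_const.sub (continuous_pow 2)).mul (continuous_gegD _ _)).sub
        ((continuous_const.mul continuous_id).mul (continuous_gegF _ _))))
  rw [intervalIntegral.integral_eq_sub_of_hasDerivAt (fun y hy => hasDerivAt_G b n y hy)
    (hcont.intervalIntegrable _ _)]
  norm_num [Real.zero_rpow (show ((b:ℝ) + 3/2) ≠ 0 by positivity)]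

/-- base integral: `∫ gegE = 0`. -/
lemma int_gegE_zero (b n : ℕ) : (∫ y in (-1:ℝ)..1, gegE b n y) = 0 := by
  simpa [gegE] using int_G_deriv b n

/-- reduction: moments of `gegE` kill moments of `gegF`. -/
lemma red (d b n : ℕ) (h : (∫ y in (-1:ℝ)..1, y ^ d * gegE b n y) = 0) :
    (∫ y in (-1:ℝ)..1, y ^ d * gegF b (n+1) y * (1 - y^2) ^ ((b:ℝ) + 1/2)) = 0 := by
  have hK : (((n:ℝ)+1) * ((n:ℝ)+2*(b:ℝ)+3)) ≠ 0 := by positivity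
  have hmain : (((n:ℝ)+1) * ((n:ℝ)+2*(b:ℝ)+3)) *
      (∫ y in (-1:ℝ)..1, y ^ d * gegF b (n+1) y * (1 - y^2) ^ ((b:ℝ) + 1/2)) = 0 := by
    rw [← intervalIntegral.integral_const_mul]
    have heq : ∀ y : ℝ, (((n:ℝ)+1) * ((n:ℝ)+2*(b:ℝ)+3)) *
        (y ^ d * gegF b (n+1) y * (1 - y^2) ^ ((b:ℝ) + 1/2))
        = (-(2*(b:ℝ)+2)) * (y ^ d * gegE b n y) := by
      intro y
      have hkey := key_identity b n y
      unfold gegE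
      linear_combination ((y:ℝ) ^ d * (1 - y^2) ^ ((b:ℝ) + 1/2)) * hkey
    rw [intervalIntegral.integral_congr (fun y _ => heq y),
      intervalIntegral.integral_const_mul, h, mul_zero]
  exact (mul_eq_zero.1 hmain).resolve_left hK

/-- integration by parts step. -/
lemma parts (d b n : ℕ)
    (h : (∫ y in (-1:ℝ)..1, y ^ d * ((1 - y^2) ^ ((b:ℝ) + 3/2) * gegF (b+1) n y)) = 0) :
    (∫ y in (-1:ℝ)..1, y ^ (d+1) * gegE b n y) = 0 := by
  set G : ℝ → ℝ := fun x => (1 - x^2) ^ ((b:ℝ) + 3/2) * gegF (b+1) n x with hGdef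
  have hcontG : Continuous G :=
    (continuous_weight _ (by positivity)).mul (continuous_gegF _ _)
  have hder : ∀ y ∈ Set.uIcc (-1:ℝ) 1,
      HasDerivAt (fun x : ℝ => x ^ (d+1) * G x)
        (((d:ℝ)+1) * y ^ d * G y + y ^ (d+1) * gegE b n y) y := by
    intro y hy
    have h1 : HasDerivAt (fun x : ℝ => x ^ (d+1)) (((d:ℝ)+1) * y ^ d) y := by
      simpa using hasDerivAt_pow (d+1) y
    have h2 := hasDerivAt_G b n y hy
    simpa [gegE] using h1.fun_mul h2
  have hint : (∫ y in (-1:ℝ)..1,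
      (((d:ℝ)+1) * y ^ d * G y + y ^ (d+1) * gegE b n y)) = 0 := by
    rw [intervalIntegral.integral_eq_sub_of_hasDerivAt hder
      ((((continuous_const.mul (continuous_pow d)).mul hcontG).add
        ((continuous_pow (d+1)).mul (continuous_gegE b n))).intervalIntegrable _ _)]
    have g1 : G 1 = 0 := by
      have h1 : 1 - (1:ℝ)^2 = 0 := by norm_num
      simp [hGdef, h1, Real.zero_rpow (show ((b:ℝ) + 3/2) ≠ 0 by positivity)]
    have g2 : G (-1) = 0 := by
      have h1 : 1 - (-1:ℝ)^2 = 0 := by norm_num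
      simp [hGdef, h1, Real.zero_rpow (show ((b:ℝ) + 3/2) ≠ 0 by positivity)]
    show (1:ℝ) ^ (d+1) * G 1 - (-1:ℝ) ^ (d+1) * G (-1) = 0
    rw [g1, g2]
    ring
  rw [intervalIntegral.integral_add
      (((continuous_const.fun_mul (continuous_pow d)).fun_mul hcontG).intervalIntegrable _ _)
      (((continuous_pow (d+1)).fun_mul (continuous_gegE b n)).intervalIntegrable _ _)] at hint
  have h' : (∫ y in (-1:ℝ)..1, ((d:ℝ)+1) * y ^ d * G y) = 0 := by
    have : (∫ y in (-1:ℝ)..1, ((d:ℝ)+1) * y ^ d * G y)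
        = ((d:ℝ)+1) * ∫ y in (-1:ℝ)..1, y ^ d * G y := by
      rw [← intervalIntegral.integral_const_mul]
      exact intervalIntegral.integral_congr (fun y _ => by ring)
    rw [this, h, mul_zero]
  linarith [hint, h']

/-- the orthogonality lemma -/
lemma ortho : ∀ d b n : ℕ, d < n →
    (∫ y in (-1:ℝ)..1, y ^ d * gegF b n y * (1 - y^2) ^ ((b:ℝ) + 1/2)) = 0 := by
  intro d
  induction d with
  | zero =>
    intro b n hn
    obtain ⟨n', rfl⟩ : ∃ n', n = n' + 1 := ⟨n - 1, by omega⟩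
    refine red 0 b n' ?_
    simpa using int_gegE_zero b n'
  | succ d ih =>
    intro b n hn
    obtain ⟨n', rfl⟩ : ∃ n', n = n' + 1 := ⟨n - 1, by omega⟩
    refine red (d+1) b n' (parts d b n' ?_)
    have hc : ((b:ℝ) + 3/2) = (((b+1:ℕ)):ℝ) + 1/2 := by push_cast; ring
    have := ih (b+1) n' (by omega)
    rw [← this]
    refine intervalIntegral.integral_congr (fun y _ => ?_)
    rw [hc]; ring


lemma continuous_geg (n : ℕ) : Continuous (geg n) := by
  have : geg n = gegF 1 n := funext fun y => geg_eq_gegF n y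
  rw [this]; exact continuous_gegF 1 n

lemma ortho32 (d m : ℕ) (h : d < m) :
    (∫ y in (-1:ℝ)..1, y ^ d * geg m y * (1 - y^2) ^ ((3:ℝ)/2)) = 0 := by
  have h2 := ortho d 1 m h
  rw [← h2]
  refine intervalIntegral.integral_congr fun y _ => ?_
  rw [geg_eq_gegF]
  norm_num

lemma ortho_poly (p : Polynomial ℝ) (m : ℕ) (h : p.natDegree < m) :
    (∫ y in (-1:ℝ)..1, Polynomial.eval y p * geg m y * (1 - y^2) ^ ((3:ℝ)/2)) = 0 := by
  have hy : ∀ y : ℝ, Polynomial.eval y p * geg m y * (1 - y^2) ^ ((3:ℝ)/2)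
      = ∑ i ∈ Finset.range (p.natDegree+1),
          p.coeff i * (y ^ i * geg m y * (1 - y^2) ^ ((3:ℝ)/2)) := by
    intro y
    rw [Polynomial.eval_eq_sum_range, Finset.sum_mul, Finset.sum_mul]
    exact Finset.sum_congr rfl fun i _ => by ring
  have hcont : ∀ i : ℕ, Continuous (fun y : ℝ =>
      p.coeff i * (y ^ i * geg m y * (1 - y^2) ^ ((3:ℝ)/2))) := by
    intro i
    exact continuous_const.mul (((continuous_pow i).mul (continuous_geg m)).mul
      (continuous_weight _ (by norm_num)))
  rw [intervalIntegral.integral_congr (fun y _ => hy y),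
    intervalIntegral.integral_finset_sum (fun i _ => (hcont i).intervalIntegrable _ _)]
  refine Finset.sum_eq_zero fun i hi => ?_
  rw [intervalIntegral.integral_const_mul, ortho32 i m (by
    have := Finset.mem_range.1 hi; omega), mul_zero]

noncomputable def gPoly (n : ℕ) : Polynomial ℝ :=
  ∑ k ∈ Finset.range (n/2+1),
    Polynomial.C (gcc 1 n k * 2 ^ (n - 2*k)) * Polynomial.X ^ (n - 2*k)

lemma gPoly_eval (n : ℕ) (y : ℝ) : Polynomial.eval y (gPoly n) = geg n y := by
  rw [geg_eq_gegF]
  unfold gPoly gegF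
  rw [Polynomial.eval_finset_sum]
  refine Finset.sum_congr rfl fun k _ => ?_
  simp [mul_pow]
  ring

lemma gPoly_natDegree (n : ℕ) : (gPoly n).natDegree ≤ n := by
  refine Polynomial.natDegree_sum_le_of_forall_le _ _ fun k hk => ?_
  refine le_trans (Polynomial.natDegree_C_mul_le _ _) ?_
  rw [Polynomial.natDegree_X_pow]
  omega

lemma cbar_core (i j m : ℕ) (h : i + j < m) :
    (∫ y in (-1:ℝ)..1, geg i y * geg j y * geg m y * (1 - y^2) ^ ((3:ℝ)/2)) = 0 := by
  have hdeg : (gPoly i * gPoly j).natDegree < m :=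
    lt_of_le_of_lt (le_trans (Polynomial.natDegree_mul_le)
      (add_le_add (gPoly_natDegree i) (gPoly_natDegree j))) h
  have h2 := ortho_poly (gPoly i * gPoly j) m hdeg
  rw [← h2]
  exact intervalIntegral.integral_congr fun y _ => by
    simp only [Polynomial.eval_mul, gPoly_eval]

lemma cquad_core (i j k m : ℕ) (h : i + j + k + 2 < m) :
    (∫ y in (-1:ℝ)..1, geg i y * geg j y * geg k y * geg m y * (1 - y^2) ^ ((5:ℝ)/2)) = 0 := by
  set p : Polynomial ℝ := gPoly i * gPoly j * gPoly k * (1 - Polynomial.X ^ 2) with hp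
  have hdeg : p.natDegree < m := by
    have h1 : ((1 : Polynomial ℝ) - Polynomial.X ^ 2).natDegree ≤ 2 := by
      refine le_trans (Polynomial.natDegree_sub_le _ _) ?_
      simp [Polynomial.natDegree_one, Polynomial.natDegree_X_pow]
    calc p.natDegree ≤ (gPoly i * gPoly j * gPoly k).natDegree
          + ((1 : Polynomial ℝ) - Polynomial.X ^ 2).natDegree := Polynomial.natDegree_mul_le
      _ ≤ ((gPoly i * gPoly j).natDegree + (gPoly k).natDegree) + 2 :=
          add_le_add Polynomial.natDegree_mul_le h1
      _ ≤ ((gPoly i).natDegree + (gPoly j).natDegree + (gPoly k).natDegree) + 2 :=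
          add_le_add (add_le_add Polynomial.natDegree_mul_le le_rfl) le_rfl
      _ ≤ i + j + k + 2 :=
          add_le_add (add_le_add (add_le_add (gPoly_natDegree i) (gPoly_natDegree j))
            (gPoly_natDegree k)) le_rfl
      _ < m := h
  have h2 := ortho_poly p m hdeg
  rw [← h2]
  refine intervalIntegral.integral_congr fun y hy => ?_
  have hy2 : 0 ≤ 1 - y^2 := by
    rw [Set.uIcc_of_le (by norm_num)] at hy
    nlinarith [hy.1, hy.2]
  have h52 : (1 - y^2) ^ ((5:ℝ)/2) = (1 - y^2) * (1 - y^2) ^ ((3:ℝ)/2) := by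
    have h1 : ((3:ℝ)/2) + 1 = (5:ℝ)/2 := by norm_num
    rw [← h1, rpow_succ' _ _ hy2 (by norm_num)]
  rw [h52, hp]
  simp only [Polynomial.eval_mul, Polynomial.eval_sub, Polynomial.eval_one,
    Polynomial.eval_pow, Polynomial.eval_X, gPoly_eval]
  ring

/-- Vanishing of the Yang–Mills Fourier coefficients on resonant indices where one
frequency `ω_n = n + 2` equals the sum of the others. -/
theorem YM_fourier_coefficients_vanish :
    (∀ i j m : ℕ,
        (m + 2 = (i + 2) + (j + 2) ∨ j + 2 = (i + 2) + (m + 2) ∨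
          i + 2 = (j + 2) + (m + 2)) →
        cbar i j m = 0) ∧
    (∀ i j k m : ℕ,
        (m + 2 = (i + 2) + (j + 2) + (k + 2) ∨
          k + 2 = (i + 2) + (j + 2) + (m + 2) ∨
          j + 2 = (i + 2) + (k + 2) + (m + 2) ∨
          i + 2 = (j + 2) + (k + 2) + (m + 2)) →
        cquad i j k m = 0) := by
  constructor
  · intro i j m h
    have hint : (∫ y in (-1:ℝ)..1,
        geg i y * geg j y * geg m y * (1 - y ^ 2) ^ ((3:ℝ) / 2)) = 0 := by
      rcases h with h | h | h
      · exact cbar_core i j m (by omega)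
      · rw [intervalIntegral.integral_congr
          (fun y (_ : y ∈ Set.uIcc (-1:ℝ) 1) => by ring :
            Set.EqOn (fun y => geg i y * geg j y * geg m y * (1 - y ^ 2) ^ ((3:ℝ) / 2))
              (fun y => geg i y * geg m y * geg j y * (1 - y ^ 2) ^ ((3:ℝ) / 2)) _)]
        exact cbar_core i m j (by omega)
      · rw [intervalIntegral.integral_congr
          (fun y (_ : y ∈ Set.uIcc (-1:ℝ) 1) => by ring :
            Set.EqOn (fun y => geg i y * geg j y * geg m y * (1 - y ^ 2) ^ ((3:ℝ) / 2))
              (fun y => geg j y * geg m y * geg i y * (1 - y ^ 2) ^ ((3:ℝ) / 2)) _)]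
        exact cbar_core j m i (by omega)
    unfold cbar
    rw [hint, mul_zero]
  · intro i j k m h
    have hint : (∫ y in (-1:ℝ)..1,
        geg i y * geg j y * geg k y * geg m y * (1 - y ^ 2) ^ ((5:ℝ) / 2)) = 0 := by
      rcases h with h | h | h | h
      · exact cquad_core i j k m (by omega)
      · rw [intervalIntegral.integral_congr
          (fun y (_ : y ∈ Set.uIcc (-1:ℝ) 1) => by ring :
            Set.EqOn (fun y => geg i y * geg j y * geg k y * geg m y * (1 - y ^ 2) ^ ((5:ℝ) / 2))
              (fun y => geg i y * geg j y * geg m y * geg k y * (1 - y ^ 2) ^ ((5:ℝ) / 2)) _)]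
        exact cquad_core i j m k (by omega)
      · rw [intervalIntegral.integral_congr
          (fun y (_ : y ∈ Set.uIcc (-1:ℝ) 1) => by ring :
            Set.EqOn (fun y => geg i y * geg j y * geg k y * geg m y * (1 - y ^ 2) ^ ((5:ℝ) / 2))
              (fun y => geg i y * geg k y * geg m y * geg j y * (1 - y ^ 2) ^ ((5:ℝ) / 2)) _)]
        exact cquad_core i k m j (by omega)
      · rw [intervalIntegral.integral_congr
          (fun y (_ : y ∈ Set.uIcc (-1:ℝ) 1) => by ring :
            Set.EqOn (fun y => geg i y * geg j y * geg k y * geg m y * (1 - y ^ 2) ^ ((5:ℝ) / 2))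
              (fun y => geg j y * geg k y * geg m y * geg i y * (1 - y ^ 2) ^ ((5:ℝ) / 2)) _)]
        exact cquad_core j k m i (by omega)
    unfold cquad
    rw [hint, mul_zero]
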